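/- For every positive integer m, both functions u₁(x₁, x₂) = sin(mπx₁/L) and u₂(x₁, x₂) = x₂ sin(mπx₁/L) satisfy Δ²u = (m⁴π⁴/L⁴)·u together with the boundary conditions u = u_{x₁x₁} = 0 on x₁ ∈ {0, L} and u_{x₂x₂} = u_{x₂x₂x₂} = 0 everywhere; in particular the eigenvalue m⁴π⁴/L⁴ of problem (eigen2) has at least two linearly independent eigenfunctions. -/

import Mathlib

/-- First partial derivative with respect to the first variable. -/
noncomputable def pd1 (u : ℝ → ℝ → ℝ) : ℝ → ℝ → ℝ := fun a b => deriv (fun x => u x b) a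

/-- First partial derivative with respect to the second variable. -/
noncomputable def pd2 (u : ℝ → ℝ → ℝ) : ℝ → ℝ → ℝ := fun a b => deriv (fun y => u a y) b

/-- The planar biharmonic operator Δ²u = u_{x₁x₁x₁x₁} + 2u_{x₁x₁x₂x₂} + u_{x₂x₂x₂x₂}. -/
noncomputable def biharm (u : ℝ → ℝ → ℝ) : ℝ → ℝ → ℝ := fun a b =>
  pd1 (pd1 (pd1 (pd1 u))) a b + 2 * pd2 (pd2 (pd1 (pd1 u))) a b + pd2 (pd2 (pd2 (pd2 u))) a b

lemma hasDerivAt_sin_cx (c x : ℝ) :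
    HasDerivAt (fun t => Real.sin (c * t)) (c * Real.cos (c * x)) x := by
  have h1 : HasDerivAt (fun t : ℝ => c * t) c x := by
    simpa using (hasDerivAt_id x).const_mul c
  simpa [mul_comm, Function.comp_def] using (Real.hasDerivAt_sin (c * x)).comp x h1

lemma hasDerivAt_cos_cx (c x : ℝ) :
    HasDerivAt (fun t => Real.cos (c * t)) (-(c * Real.sin (c * x))) x := by
  have h1 : HasDerivAt (fun t : ℝ => c * t) c x := by
    simpa using (hasDerivAt_id x).const_mul c
  simpa [mul_comm, Function.comp_def] using (Real.hasDerivAt_cos (c * x)).comp x h1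

lemma pd2_const_in_y (g : ℝ → ℝ) : pd2 (fun a _ => g a) = fun _ _ => 0 := by
  funext a b; simp [pd2]

lemma pd2_linear (g : ℝ → ℝ) : pd2 (fun a b => b * g a) = fun a _ => g a := by
  funext a b
  simpa [pd2] using ((hasDerivAt_id b).mul_const (g a)).deriv

lemma pd1_sin (c : ℝ) : pd1 (fun a _ => Real.sin (c * a)) = fun a _ => c * Real.cos (c * a) := by
  funext a b
  simpa [pd1] using (hasDerivAt_sin_cx c a).deriv

lemma pd1_cos (c d : ℝ) :
    pd1 (fun a _ => d * Real.cos (c * a)) = fun a _ => -(d * c * Real.sin (c * a)) := by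
  funext a b
  have := ((hasDerivAt_cos_cx c a).const_mul d).deriv
  simp only [pd1]
  rw [this]; ring

lemma pd1_msin (c d : ℝ) :
    pd1 (fun a _ => d * Real.sin (c * a)) = fun a _ => d * c * Real.cos (c * a) := by
  funext a b
  have := ((hasDerivAt_sin_cx c a).const_mul d).deriv
  simp only [pd1]
  rw [this]; ring

lemma pd1_bsin (c : ℝ) :
    pd1 (fun a b => b * Real.sin (c * a)) = fun a b => b * (c * Real.cos (c * a)) := by
  funext a b
  simpa [pd1] using ((hasDerivAt_sin_cx c a).const_mul b).deriv

lemma pd1_bcos (c d : ℝ) :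
    pd1 (fun a b => b * (d * Real.cos (c * a))) = fun a b => b * (-(d * c * Real.sin (c * a))) := by
  funext a b
  have := (((hasDerivAt_cos_cx c a).const_mul d).const_mul b).deriv
  simp only [pd1]
  rw [this]; ring

lemma pd1_bmsin (c d : ℝ) :
    pd1 (fun a b => b * (d * Real.sin (c * a))) = fun a b => b * (d * c * Real.cos (c * a)) := by
  funext a b
  have := (((hasDerivAt_sin_cx c a).const_mul d).const_mul b).deriv
  simp only [pd1]
  rw [this]; ring

theorem stmt10 (L ℓ : ℝ) (hL : 0 < L) (hℓ : 0 < ℓ) (m : ℕ) (hm : 0 < m) :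
    (∀ u ∈ ({fun x₁ _ => Real.sin ((m : ℝ) * Real.pi * x₁ / L),
              fun x₁ x₂ => x₂ * Real.sin ((m : ℝ) * Real.pi * x₁ / L)} :
              Set (ℝ → ℝ → ℝ)),
      (∀ a b : ℝ, biharm u a b = ((m : ℝ) ^ 4 * Real.pi ^ 4 / L ^ 4) * u a b) ∧
      (∀ b : ℝ, u 0 b = 0 ∧ u L b = 0 ∧ pd1 (pd1 u) 0 b = 0 ∧ pd1 (pd1 u) L b = 0) ∧
      (∀ a b : ℝ, pd2 (pd2 u) a b = 0 ∧ pd2 (pd2 (pd2 u)) a b = 0)) ∧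
    (∀ c : ℝ, ¬ (∀ a ∈ Set.Ioo (0 : ℝ) L, ∀ b ∈ Set.Ioo (-ℓ) ℓ,
      b * Real.sin ((m : ℝ) * Real.pi * a / L) = c * Real.sin ((m : ℝ) * Real.pi * a / L))) := by
  have hL0 : L ≠ 0 := ne_of_gt hL
  set c : ℝ := (m : ℝ) * Real.pi / L with hc
  have hcx : ∀ x : ℝ, (m : ℝ) * Real.pi * x / L = c * x := fun x => by
    rw [hc]; ring
  have hc4 : (m : ℝ) ^ 4 * Real.pi ^ 4 / L ^ 4 = c ^ 4 := by
    rw [hc]; field_simp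
  have hcL : c * L = (m : ℝ) * Real.pi := by
    rw [hc]; field_simp
  have hsin0 : Real.sin (c * 0) = 0 := by simp
  have hsinL : Real.sin (c * L) = 0 := by
    rw [hcL, Real.sin_nat_mul_pi]
  constructor
  · intro u hu
    rcases hu with hu | hu
    · -- u₁
      have hue : u = fun a (_ : ℝ) => Real.sin (c * a) := by
        rw [hu]; funext a b; rw [hcx]
      subst hue
      have h1 := pd1_sin c
      have h2 : pd1 (pd1 fun a _ => Real.sin (c * a)) = fun a _ => -(c ^ 2 * Real.sin (c * a)) := by
        rw [h1, pd1_cos c c]; funext a b; ring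
      have h3 : pd1 (pd1 (pd1 fun a _ => Real.sin (c * a)))
          = fun a _ => -(c ^ 3 * Real.cos (c * a)) := by
        rw [h2]
        have : (fun a (_ : ℝ) => -(c ^ 2 * Real.sin (c * a)))
            = fun a (_ : ℝ) => (-(c ^ 2)) * Real.sin (c * a) := by funext a b; ring
        rw [this, pd1_msin c (-(c ^ 2))]; funext a b; ring
      have h4 : pd1 (pd1 (pd1 (pd1 fun a _ => Real.sin (c * a))))
          = fun a _ => c ^ 4 * Real.sin (c * a) := by
        rw [h3]
        have : (fun a (_ : ℝ) => -(c ^ 3 * Real.cos (c * a)))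
            = fun a (_ : ℝ) => (-(c ^ 3)) * Real.cos (c * a) := by funext a b; ring
        rw [this, pd1_cos c (-(c ^ 3))]; funext a b; ring
      refine ⟨?_, ?_, ?_⟩
      · intro a b
        simp only [biharm]
        rw [h4, h2, pd2_const_in_y (fun a => -(c ^ 2 * Real.sin (c * a)))]
        rw [pd2_const_in_y (fun _ => (0 : ℝ)),
            pd2_const_in_y (fun a => Real.sin (c * a)),
            pd2_const_in_y (fun _ => (0 : ℝ)),
            pd2_const_in_y (fun _ => (0 : ℝ))]
        simp only [pd2, deriv_const]; rw [hc4]; ring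
      · intro b
        refine ⟨hsin0, hsinL, ?_, ?_⟩ <;> simp [h2, hsin0, hsinL]
      · intro a b
        rw [pd2_const_in_y (fun a => Real.sin (c * a)),
            pd2_const_in_y (fun _ => (0 : ℝ)),
            pd2_const_in_y (fun _ => (0 : ℝ))]
        exact ⟨rfl, rfl⟩
    · -- u₂
      simp only [Set.mem_singleton_iff] at hu
      have hue : u = fun a b => b * Real.sin (c * a) := by
        rw [hu]; funext a b; rw [hcx]
      subst hue
      have h1 := pd1_bsin c
      have h2 : pd1 (pd1 fun a b => b * Real.sin (c * a))
          = fun a b => b * (-(c ^ 2) * Real.sin (c * a)) := by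
        rw [h1]
        have : (fun a b => b * (c * Real.cos (c * a)))
            = fun a b => b * ((c : ℝ) * Real.cos (c * a)) := rfl
        rw [pd1_bcos c c]; funext a b; ring
      have h3 : pd1 (pd1 (pd1 fun a b => b * Real.sin (c * a)))
          = fun a b => b * (-(c ^ 3) * Real.cos (c * a)) := by
        rw [h2, pd1_bmsin c (-(c ^ 2))]; funext a b; ring
      have h4 : pd1 (pd1 (pd1 (pd1 fun a b => b * Real.sin (c * a))))
          = fun a b => b * (c ^ 4 * Real.sin (c * a)) := by
        rw [h3, pd1_bcos c (-(c ^ 3))]; funext a b; ring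
      refine ⟨?_, ?_, ?_⟩
      · intro a b
        simp only [biharm]
        rw [h4, h2, pd2_linear (fun a => -(c ^ 2) * Real.sin (c * a))]
        rw [pd2_const_in_y (fun a => -(c ^ 2) * Real.sin (c * a)),
            pd2_linear (fun a => Real.sin (c * a)),
            pd2_const_in_y (fun a => Real.sin (c * a)),
            pd2_const_in_y (fun _ => (0 : ℝ))]
        simp only [pd2, deriv_const]; rw [hc4]; ring
      · intro b
        refine ⟨by simp [hsin0], by simp [hsinL], ?_, ?_⟩ <;> simp [h2, hsin0, hsinL]
      · intro a b
        rw [pd2_linear (fun a => Real.sin (c * a)),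
            pd2_const_in_y (fun a => Real.sin (c * a)),
            pd2_const_in_y (fun _ => (0 : ℝ))]
        exact ⟨rfl, rfl⟩
  · -- no single scalar c works
    intro k hk
    have hm' : (1 : ℝ) ≤ (m : ℝ) := by exact_mod_cast hm
    set a : ℝ := L / (2 * m) with ha
    have ham : (0 : ℝ) < 2 * m := by positivity
    have ha0 : 0 < a := by positivity
    have haL : a < L := by
      rw [ha, div_lt_iff₀ ham]
      nlinarith
    have hsa : Real.sin ((m : ℝ) * Real.pi * a / L) = 1 := by
      have : (m : ℝ) * Real.pi * a / L = Real.pi / 2 := by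
        rw [ha]; field_simp
      rw [this, Real.sin_pi_div_two]
    have haI : a ∈ Set.Ioo (0 : ℝ) L := ⟨ha0, haL⟩
    have hb0 : (0 : ℝ) ∈ Set.Ioo (-ℓ) ℓ := ⟨by linarith, hℓ⟩
    have hb1 : (ℓ / 2 : ℝ) ∈ Set.Ioo (-ℓ) ℓ := ⟨by linarith, by linarith⟩
    have e0 := hk a haI 0 hb0
    have e1 := hk a haI (ℓ / 2) hb1
    rw [hsa] at e0 e1
    simp at e0 e1
    rw [← e0] at e1
    linarith
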